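/- With P = ℂ[x₁,x₂,x₃], f₁ = 2x₁+x₂x₃, f₂ = 2x₂+x₁x₃, f₃ = x₁x₂, the Koszul map d₂ : P³ → P³, d₂(b₁₂,b₁₃,b₂₃) = (−b₁₂f₂ − b₁₃f₃, b₁₂f₁ − b₂₃f₃, b₁₃f₁ + b₂₃f₂), and the Koszul map d₃ : P → P³, d₃(c) = (c·f₃, −c·f₂, c·f₁), one has ker d₂ = im d₃. (Thus the degree −2 Koszul cohomology of (∂W) for W = x₁²+x₂²+x₁x₂x₃ vanishes.) -/

import Mathlib

noncomputable section
open MvPolynomial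

/-- `P = ℂ[x₁,x₂,x₃]` with `x₁ = X 0`, `x₂ = X 1`, `x₃ = X 2`. -/
abbrev P : Type := MvPolynomial (Fin 3) ℂ

/-- `f₁ = 2x₁+x₂x₃ = ∂W/∂x₁` for `W = x₁²+x₂²+x₁x₂x₃`. -/
def f1 : P := 2 * X 0 + X 1 * X 2
/-- `f₂ = 2x₂+x₁x₃`. -/
def f2 : P := 2 * X 1 + X 0 * X 2
/-- `f₃ = x₁x₂`. -/
def f3 : P := X 0 * X 1

/-- Koszul differential `d₂ : P³ → P³`, middle term indexed by `(1,2), (1,3), (2,3)`. -/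
def d2 : P × P × P → P × P × P := fun b =>
  (-(b.1 * f2) - b.2.1 * f3, b.1 * f1 - b.2.2 * f3, b.2.1 * f1 + b.2.2 * f2)

/-- Koszul differential `d₃ : P → P³`. -/
def d3 : P → P × P × P := fun c => (c * f3, -(c * f2), c * f1)

lemma prime_X0 : Prime (X 0 : P) := by
  rw [← MulEquiv.prime_iff (MvPolynomial.finSuccEquiv ℂ 2).toRingEquiv.toMulEquiv]
  simpa [MvPolynomial.finSuccEquiv_X_zero] using Polynomial.prime_X

/-- The change-of-variables automorphism `x₁ ↦ 2x₁ + x₂x₃`. -/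
def chvar : P ≃ₐ[ℂ] P :=
  AlgEquiv.ofAlgHom (aeval ![2 * X 0 + X 1 * X 2, X 1, X 2])
    (aeval ![C (1/2 : ℂ) * (X 0 - X 1 * X 2), X 1, X 2])
    (by
      apply MvPolynomial.algHom_ext; intro i; fin_cases i <;>
        simp [← map_ofNat (C : ℂ →+* P) 2, ← C_mul, mul_comm, mul_assoc, mul_left_comm])
    (by
      apply MvPolynomial.algHom_ext; intro i; fin_cases i <;>
        simp [← map_ofNat (C : ℂ →+* P) 2, ← C_mul, mul_comm, mul_assoc, mul_left_comm,
          mul_sub, sub_mul])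

lemma prime_f1 : Prime f1 := by
  have h := (MulEquiv.prime_iff chvar.toRingEquiv.toMulEquiv (p := (X 0 : P))).mpr prime_X0
  have hx : chvar.toRingEquiv.toMulEquiv (X 0 : P) = f1 := by
    show chvar (X 0) = f1
    simp [chvar, f1]
  rwa [hx] at h

/-- If `f1 ∣ g` then `g` vanishes at `(1,1,-2)`. -/
lemma eval_pt_of_f1_dvd {g : P} (h : f1 ∣ g) : eval ![(1:ℂ), 1, -2] g = 0 := by
  obtain ⟨q, rfl⟩ := h
  have : eval ![(1:ℂ), 1, -2] f1 = 0 := by simp [f1]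
  simp [this]

lemma not_f1_dvd_X0 : ¬ f1 ∣ (X 0 : P) := by
  intro h
  have := eval_pt_of_f1_dvd h
  simp at this

lemma not_f1_dvd_X1 : ¬ f1 ∣ (X 1 : P) := by
  intro h
  have := eval_pt_of_f1_dvd h
  simp at this

/- STATEMENT 17: `ker d₂ = im d₃`, i.e. the degree `−2` Koszul cohomology of `∂W`
for `W = x₁²+x₂²+x₁x₂x₃` vanishes. -/
theorem stmt17 : ∀ b : P × P × P, d2 b = 0 ↔ ∃ c : P, b = d3 c := by
  intro b
  constructor
  · intro hb
    obtain ⟨b12, b13, b23⟩ := b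
    simp only [d2, Prod.ext_iff, Prod.fst_zero, Prod.snd_zero] at hb
    obtain ⟨e1, e2, e3⟩ := hb
    -- from e2 : b12 * f1 - b23 * f3 = 0
    have h2 : b12 * f1 = b23 * f3 := by linear_combination e2
    have hdvd : f1 ∣ b23 * (X 0 * X 1) := ⟨b12, by rw [mul_comm f1 b12, h2]; rfl⟩
    have hb23 : f1 ∣ b23 := by
      rcases prime_f1.dvd_mul.mp hdvd with h | h
      · exact h
      rcases prime_f1.dvd_mul.mp h with h' | h'
      · exact absurd h' not_f1_dvd_X0
      · exact absurd h' not_f1_dvd_X1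
    obtain ⟨c, hc⟩ := hb23
    refine ⟨c, ?_⟩
    have hf1 : (f1 : P) ≠ 0 := prime_f1.ne_zero
    have hb12 : b12 = c * f3 := by
      apply mul_right_cancel₀ hf1
      rw [h2, hc]; ring
    have hb13 : b13 = -(c * f2) := by
      apply mul_right_cancel₀ hf1
      have : b13 * f1 = -(b23 * f2) := by linear_combination e3
      rw [this, hc]; ring
    simp only [d3, Prod.mk.injEq]
    exact ⟨hb12, hb13, by rw [hc]; ring⟩
  · rintro ⟨c, rfl⟩
    simp only [d3, d2, Prod.ext_iff, Prod.fst_zero, Prod.snd_zero]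
    refine ⟨by ring, by ring, by ring⟩
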